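/- Let a < b and let f ∈ Δ³[a,b], i.e. f : [a,b] → ℝ is continuous and all its third divided differences over four distinct points of [a,b] are nonnegative. Then f is differentiable at every point of (a,b) and its derivative f' is a convex function on (a,b). -/

import Mathlib

set_option maxHeartbeats 1000000
open Topology Filter Set


/-- Third-order divided difference `[t0, t1, t2, t3; f]` at four (distinct) points. -/
noncomputable def dd4 (f : ℝ → ℝ) (t0 t1 t2 t3 : ℝ) : ℝ :=
  f t0 / ((t0 - t1) * (t0 - t2) * (t0 - t3)) +
  f t1 / ((t1 - t0) * (t1 - t2) * (t1 - t3)) +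
  f t2 / ((t2 - t0) * (t2 - t1) * (t2 - t3)) +
  f t3 / ((t3 - t0) * (t3 - t1) * (t3 - t2))

/-- `f ∈ Δ³[a,b]`: `f` is continuous on `[a,b]` and all its third divided differences
over four distinct points of `[a,b]` are nonnegative (3-monotone). -/
def Delta3 (a b : ℝ) (f : ℝ → ℝ) : Prop :=
  ContinuousOn f (Set.Icc a b) ∧
  ∀ t0 t1 t2 t3 : ℝ, t0 ∈ Set.Icc a b → t1 ∈ Set.Icc a b →
    t2 ∈ Set.Icc a b → t3 ∈ Set.Icc a b →
    t0 ≠ t1 → t0 ≠ t2 → t0 ≠ t3 → t1 ≠ t2 → t1 ≠ t3 → t2 ≠ t3 →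
    0 ≤ dd4 f t0 t1 t2 t3


noncomputable def dd3 (f : ℝ → ℝ) (x y z : ℝ) : ℝ :=
  f x / ((x - y) * (x - z)) + f y / ((y - x) * (y - z)) + f z / ((z - x) * (z - y))

lemma dd3_rot (f : ℝ → ℝ) (x y z : ℝ) : dd3 f x y z = dd3 f z x y := by
  unfold dd3; ring

lemma dd3_comm (f : ℝ → ℝ) (x y z : ℝ) : dd3 f x y z = dd3 f y x z := by
  unfold dd3; ring

lemma dd4_perm1 (f : ℝ → ℝ) (t0 t1 t2 t3 : ℝ) : dd4 f t0 t1 t2 t3 = dd4 f t1 t0 t2 t3 := by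
  unfold dd4; ring

lemma dd4_rot (f : ℝ → ℝ) (t0 t1 t2 t3 : ℝ) : dd4 f t0 t1 t2 t3 = dd4 f t3 t0 t1 t2 := by
  unfold dd4; ring

/-- Recurrence: second-to-third order. -/
lemma r2 (f : ℝ → ℝ) {x y z : ℝ} (h1 : x ≠ y) (h2 : y ≠ z) (h3 : x ≠ z) :
    dd3 f x y z = ((f z - f y) / (z - y) - (f y - f x) / (y - x)) / (z - x) := by
  have a1 : y - x ≠ 0 := sub_ne_zero.2 h1.symm
  have a2 : z - y ≠ 0 := sub_ne_zero.2 h2.symm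
  have a3 : z - x ≠ 0 := sub_ne_zero.2 h3.symm
  have a4 : x - y ≠ 0 := sub_ne_zero.2 h1
  have a5 : y - z ≠ 0 := sub_ne_zero.2 h2
  have a6 : x - z ≠ 0 := sub_ne_zero.2 h3
  unfold dd3
  field_simp
  ring

/-- Recurrence: third-to-fourth order, proved coefficient-wise to keep `ring` small. -/
lemma r3 (f : ℝ → ℝ) {t0 t1 t2 t3 : ℝ} (h01 : t0 ≠ t1) (h02 : t0 ≠ t2) (h03 : t0 ≠ t3)
    (h12 : t1 ≠ t2) (h13 : t1 ≠ t3) (h23 : t2 ≠ t3) :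
    dd4 f t0 t1 t2 t3 = (dd3 f t1 t2 t3 - dd3 f t0 t1 t2) / (t3 - t0) := by
  have a1 : t0 - t1 ≠ 0 := sub_ne_zero.2 h01
  have a2 : t0 - t2 ≠ 0 := sub_ne_zero.2 h02
  have a3 : t0 - t3 ≠ 0 := sub_ne_zero.2 h03
  have a4 : t1 - t2 ≠ 0 := sub_ne_zero.2 h12
  have a5 : t1 - t3 ≠ 0 := sub_ne_zero.2 h13
  have a6 : t2 - t3 ≠ 0 := sub_ne_zero.2 h23
  have b1 : t1 - t0 ≠ 0 := sub_ne_zero.2 h01.symm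
  have b2 : t2 - t0 ≠ 0 := sub_ne_zero.2 h02.symm
  have b3 : t3 - t0 ≠ 0 := sub_ne_zero.2 h03.symm
  have b4 : t2 - t1 ≠ 0 := sub_ne_zero.2 h12.symm
  have b5 : t3 - t1 ≠ 0 := sub_ne_zero.2 h13.symm
  have b6 : t3 - t2 ≠ 0 := sub_ne_zero.2 h23.symm
  have c0 : f t0 / ((t0 - t1) * (t0 - t2) * (t0 - t3))
      = (0 - f t0 / ((t0 - t1) * (t0 - t2))) / (t3 - t0) := by
    field_simp
    ring
  have c1 : f t1 / ((t1 - t0) * (t1 - t2) * (t1 - t3))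
      = (f t1 / ((t1 - t2) * (t1 - t3)) - f t1 / ((t1 - t0) * (t1 - t2))) / (t3 - t0) := by
    field_simp
    ring
  have c2 : f t2 / ((t2 - t0) * (t2 - t1) * (t2 - t3))
      = (f t2 / ((t2 - t1) * (t2 - t3)) - f t2 / ((t2 - t0) * (t2 - t1))) / (t3 - t0) := by
    field_simp
    ring
  have c3 : f t3 / ((t3 - t0) * (t3 - t1) * (t3 - t2))
      = (f t3 / ((t3 - t1) * (t3 - t2)) - 0) / (t3 - t0) := by
    rw [sub_zero, div_div]; ring
  unfold dd3 dd4
  rw [c0, c1, c2, c3]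
  ring

lemma slope_sub_dd3 (f : ℝ → ℝ) {x y z : ℝ} (h1 : x ≠ y) (h2 : y ≠ z) (h3 : x ≠ z) :
    (f z - f y) / (z - y) - (f y - f x) / (y - x) = (z - x) * dd3 f x y z := by
  rw [r2 f h1 h2 h3, mul_div_cancel₀ _ (sub_ne_zero.2 h3.symm)]

lemma dd3_replace (f : ℝ → ℝ) {u v y z : ℝ} (huv : u ≠ v) (huy : u ≠ y) (huz : u ≠ z)
    (hvy : v ≠ y) (hvz : v ≠ z) (hyz : y ≠ z) :
    dd3 f u y z - dd3 f v y z = (u - v) * dd4 f u v y z := by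
  have h := r3 f (t0 := v) (t1 := y) (t2 := z) (t3 := u) hvy hvz huv.symm hyz huy.symm huz.symm
  rw [dd4_rot f v y z u, dd3_rot f y z u] at h
  rw [h, mul_div_cancel₀ _ (sub_ne_zero.2 huv)]

lemma dd2_slope (f : ℝ → ℝ) {c u v : ℝ} (hcu : c ≠ u) (hcv : c ≠ v) (huv : u ≠ v) :
    ((f v - f c) / (v - c) - (f u - f c) / (u - c)) / (v - u) = dd3 f c u v := by
  have a1 : u - c ≠ 0 := sub_ne_zero.2 hcu.symm
  have a2 : v - c ≠ 0 := sub_ne_zero.2 hcv.symm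
  have a3 : v - u ≠ 0 := sub_ne_zero.2 huv.symm
  have a4 : c - u ≠ 0 := sub_ne_zero.2 hcu
  have a5 : c - v ≠ 0 := sub_ne_zero.2 hcv
  have a6 : u - v ≠ 0 := sub_ne_zero.2 huv
  unfold dd3
  field_simp
  ring

lemma dd3_slope (f : ℝ → ℝ) {c x y z : ℝ} (hcx : c ≠ x) (hcy : c ≠ y) (hcz : c ≠ z)
    (hxy : x ≠ y) (hxz : x ≠ z) (hyz : y ≠ z) :
    dd3 (fun t => (f t - f c) / (t - c)) x y z = dd4 f c x y z := by
  have e1 := r2 (fun t => (f t - f c) / (t - c)) hxy hyz hxz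
  rw [dd2_slope f hcy hcz hyz, dd2_slope f hcx hcy hxy] at e1
  have e2 := r3 f (t0 := x) (t1 := c) (t2 := y) (t3 := z) hcx.symm hxy hxz hcy hcz hyz
  rw [dd3_comm f x c y] at e2
  rw [e1, ← e2]
  exact (dd4_perm1 f c x y z).symm

lemma dd3_Dh (f : ℝ → ℝ) (h x y z : ℝ) :
    dd3 (fun t => (f (t + h) - f t) / h) x y z
      = (dd3 f (x + h) (y + h) (z + h) - dd3 f x y z) / h := by
  unfold dd3
  ring_nf

/-- Key slope-monotonicity for the slope function `F t = (f t - f c)/(t - c)`. -/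
lemma key_slope (a b : ℝ) (f : ℝ → ℝ) (hf : Delta3 a b f) {c : ℝ} (hc : c ∈ Set.Icc a b)
    {u v w : ℝ} (hu : u ∈ Set.Icc a b) (hv : v ∈ Set.Icc a b) (hw : w ∈ Set.Icc a b)
    (huc : u ≠ c) (hvc : v ≠ c) (hwc : w ≠ c) (huv : u < v) (hvw : v < w) :
    ((f v - f c) / (v - c) - (f u - f c) / (u - c)) / (v - u)
      ≤ ((f w - f c) / (w - c) - (f v - f c) / (v - c)) / (w - v) := by
  set F : ℝ → ℝ := fun t => (f t - f c) / (t - c) with hF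
  have h0 : 0 ≤ dd4 f c u v w :=
    hf.2 c u v w hc hu hv hw huc.symm hvc.symm hwc.symm huv.ne (huv.trans hvw).ne hvw.ne
  have h1 : (F w - F v) / (w - v) - (F v - F u) / (v - u) = (w - u) * dd3 F u v w :=
    slope_sub_dd3 F huv.ne hvw.ne (huv.trans hvw).ne
  rw [hF, dd3_slope f huc.symm hvc.symm hwc.symm huv.ne (huv.trans hvw).ne hvw.ne] at h1
  have h2 : 0 ≤ (w - u) * dd4 f c u v w :=
    mul_nonneg (by linarith) h0
  simp only [hF] at h1 ⊢
  linarith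

/-- Differentiability at interior points. -/
lemma diff_interior (a b : ℝ) (hab : a < b) (f : ℝ → ℝ) (hf : Delta3 a b f)
    {c : ℝ} (hc : c ∈ Set.Ioo a b) : ∃ L, HasDerivAt f L c := by
  obtain ⟨hac, hcb⟩ := hc
  set p : ℝ := (a + c) / 2 with hp
  set q : ℝ := (c + b) / 2 with hq
  have hap : a < p := by rw [hp]; linarith
  have hpc : p < c := by rw [hp]; linarith
  have hcq : c < q := by rw [hq]; linarith
  have hqb : q < b := by rw [hq]; linarith
  set F : ℝ → ℝ := fun t => (f t - f c) / (t - c) with hF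
  have hcI : c ∈ Set.Icc a b := ⟨hac.le, hcb.le⟩
  have haI : a ∈ Set.Icc a b := ⟨le_refl a, hab.le⟩
  have hbI : b ∈ Set.Icc a b := ⟨hab.le, le_refl b⟩
  have hpI : p ∈ Set.Icc a b := ⟨hap.le, by linarith⟩
  have hqI : q ∈ Set.Icc a b := ⟨by linarith, hqb.le⟩
  set s : Set ℝ := Set.Ioo p q \ {c} with hs
  set C₁ : ℝ := (F p - F a) / (p - a) with hC₁
  set C₂ : ℝ := (F b - F q) / (b - q) with hC₂
  set C : ℝ := max |C₁| |C₂| with hC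
  -- bounds on slopes of F inside s
  have bound : ∀ x y, x ∈ s → y ∈ s → x < y → |F y - F x| ≤ C * (y - x) := by
    intro x y hxs hys hxy
    obtain ⟨⟨hpx, hxq⟩, hxc⟩ := hxs
    obtain ⟨⟨hpy, hyq⟩, hyc⟩ := hys
    have hxc' : x ≠ c := hxc
    have hyc' : y ≠ c := hyc
    have hxI : x ∈ Set.Icc a b := ⟨by linarith, by linarith⟩
    have hyI : y ∈ Set.Icc a b := ⟨by linarith, by linarith⟩
    have hpc' : p ≠ c := hpc.ne
    have hqc' : q ≠ c := hcq.ne'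
    have hac' : a ≠ c := hac.ne
    have hbc' : b ≠ c := hcb.ne'
    have k1 : (F p - F a) / (p - a) ≤ (F x - F p) / (x - p) :=
      key_slope a b f hf hcI haI hpI hxI hac' hpc' hxc' hap hpx
    have k2 : (F x - F p) / (x - p) ≤ (F y - F x) / (y - x) :=
      key_slope a b f hf hcI hpI hxI hyI hpc' hxc' hyc' hpx hxy
    have k3 : (F y - F x) / (y - x) ≤ (F q - F y) / (q - y) :=
      key_slope a b f hf hcI hxI hyI hqI hxc' hyc' hqc' hxy hyq
    have k4 : (F q - F y) / (q - y) ≤ (F b - F q) / (b - q) :=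
      key_slope a b f hf hcI hyI hqI hbI hyc' hqc' hbc' hyq hqb
    have hlo : C₁ ≤ (F y - F x) / (y - x) := le_trans k1 k2
    have hhi : (F y - F x) / (y - x) ≤ C₂ := le_trans k3 k4
    have habs : |(F y - F x) / (y - x)| ≤ C := by
      rw [abs_le]
      constructor
      · calc -C ≤ -|C₁| := by simp [hC]
          _ ≤ C₁ := neg_abs_le C₁
          _ ≤ _ := hlo
      · exact le_trans hhi (le_trans (le_abs_self C₂) (le_max_right _ _))
    have hyx : (0:ℝ) < y - x := by linarith
    have : |F y - F x| = |(F y - F x) / (y - x)| * (y - x) := by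
      rw [abs_div, abs_of_pos hyx]
      field_simp
    rw [this]
    exact mul_le_mul_of_nonneg_right habs hyx.le
  have hC0 : 0 ≤ C := le_trans (abs_nonneg C₁) (le_max_left _ _)
  -- Lipschitz on s
  have lip : LipschitzOnWith (Real.toNNReal C) F s := by
    rw [lipschitzOnWith_iff_dist_le_mul]
    intro x hx y hy
    rcases lt_trichotomy x y with h | h | h
    · rw [Real.dist_eq, Real.dist_eq, abs_sub_comm (F x) (F y), abs_of_neg (by linarith : x - y < 0)]
      calc |F y - F x| ≤ C * (y - x) := bound x y hx hy h
        _ = ↑(Real.toNNReal C) * -(x - y) := by rw [Real.coe_toNNReal C hC0]; ring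
    · simp [h]
    · rw [Real.dist_eq, Real.dist_eq, abs_of_pos (by linarith : (0:ℝ) < x - y)]
      calc |F x - F y| ≤ C * (x - y) := bound y x hy hx h
        _ = ↑(Real.toNNReal C) * (x - y) := by rw [Real.coe_toNNReal C hC0]
  obtain ⟨G, hG, hEq⟩ := lip.extend_real
  refine ⟨G c, hasDerivAt_iff_tendsto_slope.2 ?_⟩
  have hmem : s ∈ 𝓝[≠] c := by
    rw [hs, Set.diff_eq, Set.inter_comm]
    exact inter_mem_nhdsWithin _ (Ioo_mem_nhds hpc hcq)
  have hGt : Filter.Tendsto G (𝓝[≠] c) (𝓝 (G c)) :=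
    (hG.continuous.tendsto c).mono_left nhdsWithin_le_nhds
  have hFG : F =ᶠ[𝓝[≠] c] G := Filter.eventuallyEq_of_mem hmem (fun x hx => hEq hx)
  have hFt : Filter.Tendsto F (𝓝[≠] c) (𝓝 (G c)) := hGt.congr' hFG.symm
  have hsl : slope f c = F := by
    funext u
    rw [slope_def_field]
  rw [hsl]
  exact hFt

/-- A 3-monotone function on `[a,b]` is differentiable on `(a,b)` and its
derivative is convex on `(a,b)`. -/
theorem statement14 (a b : ℝ) (hab : a < b) (f : ℝ → ℝ) (hf : Delta3 a b f) :
    (∀ x ∈ Set.Ioo a b, DifferentiableAt ℝ f x) ∧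
    ConvexOn ℝ (Set.Ioo a b) (deriv f) := by
  have hdiff : ∀ x ∈ Set.Ioo a b, DifferentiableAt ℝ f x := by
    intro x hx
    obtain ⟨L, hL⟩ := diff_interior a b hab f hf hx
    exact hL.differentiableAt
  refine ⟨hdiff, ?_⟩
  apply convexOn_of_slope_mono_adjacent (convex_Ioo a b)
  intro x y z hx hz hxy hyz
  have hy : y ∈ Set.Ioo a b := ⟨hx.1.trans hxy, hyz.trans hz.2⟩
  -- difference quotients converge to the derivative from the right
  have tendstoD : ∀ u ∈ Set.Ioo a b,
      Filter.Tendsto (fun h : ℝ => (f (u + h) - f u) / h) (𝓝[>] (0:ℝ)) (𝓝 (deriv f u)) := by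
    intro u hu
    obtain ⟨L, hL⟩ := diff_interior a b hab f hf hu
    have hL' : deriv f u = L := hL.deriv
    have h1 : Filter.Tendsto (slope f u) (𝓝[≠] u) (𝓝 L) := hasDerivAt_iff_tendsto_slope.1 hL
    have h2 : Filter.Tendsto (fun h : ℝ => u + h) (𝓝[>] (0:ℝ)) (𝓝[≠] u) := by
      apply Filter.Tendsto.mono_right _
        (nhdsWithin_mono u (fun y (hy : u < y) => by simpa using (ne_of_gt hy)))
      apply tendsto_nhdsWithin_of_tendsto_nhds_of_eventually_within
      · exact ((continuous_const.add continuous_id).tendsto' 0 u (by simp)).mono_left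
          nhdsWithin_le_nhds
      · filter_upwards [self_mem_nhdsWithin] with h hh
        exact lt_add_of_pos_right u hh
    have h3 : Filter.Tendsto (fun h : ℝ => slope f u (u + h)) (𝓝[>] (0:ℝ)) (𝓝 L) := h1.comp h2
    rw [hL']
    apply h3.congr
    intro h
    rw [slope_def_field]
    congr 1
    ring
  have hax : a < x := hx.1
  have hzb : z < b := hz.2
  have hxz : x < z := hxy.trans hyz
  -- eventual slope inequality for the difference quotients
  have ev : ∀ᶠ h in 𝓝[>] (0:ℝ),
      ((f (y + h) - f y) / h - (f (x + h) - f x) / h) / (y - x)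
        ≤ ((f (z + h) - f z) / h - (f (y + h) - f y) / h) / (z - y) := by
    filter_upwards [Ioo_mem_nhdsGT (show (0:ℝ) < b - z by linarith)] with h hh
    obtain ⟨h0, hbz⟩ := hh
    -- memberships
    have mx : x ∈ Set.Icc a b := ⟨by linarith, by linarith⟩
    have my : y ∈ Set.Icc a b := ⟨by linarith, by linarith⟩
    have mz : z ∈ Set.Icc a b := ⟨by linarith, by linarith⟩
    have mxh : x + h ∈ Set.Icc a b := ⟨by linarith, by linarith⟩
    have myh : y + h ∈ Set.Icc a b := ⟨by linarith, by linarith⟩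
    have mzh : z + h ∈ Set.Icc a b := ⟨by linarith, by linarith⟩
    have d1 : 0 ≤ dd4 f (x + h) x (y + h) (z + h) :=
      hf.2 _ _ _ _ mxh mx myh mzh (by intro e; linarith) (by intro e; linarith)
        (by intro e; linarith) (by intro e; linarith) (by intro e; linarith)
        (by intro e; linarith)
    have d2 : 0 ≤ dd4 f (y + h) y x (z + h) :=
      hf.2 _ _ _ _ myh my mx mzh (by intro e; linarith) (by intro e; linarith)
        (by intro e; linarith) (by intro e; linarith) (by intro e; linarith)
        (by intro e; linarith)
    have d3 : 0 ≤ dd4 f (z + h) z x y :=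
      hf.2 _ _ _ _ mzh mz mx my (by intro e; linarith) (by intro e; linarith)
        (by intro e; linarith) (by intro e; linarith) (by intro e; linarith)
        (by intro e; linarith)
    have T1 : dd3 f (x + h) (y + h) (z + h) - dd3 f x (y + h) (z + h)
        = h * dd4 f (x + h) x (y + h) (z + h) := by
      have := dd3_replace f (u := x + h) (v := x) (y := y + h) (z := z + h)
        (by intro e; linarith) (by intro e; linarith) (by intro e; linarith)
        (by intro e; linarith) (by intro e; linarith) (by intro e; linarith)
      rw [this]; ring
    have T2 : dd3 f x (y + h) (z + h) - dd3 f x y (z + h)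
        = h * dd4 f (y + h) y x (z + h) := by
      rw [dd3_comm f x (y + h) (z + h), dd3_comm f x y (z + h)]
      have := dd3_replace f (u := y + h) (v := y) (y := x) (z := z + h)
        (by intro e; linarith) (by intro e; linarith) (by intro e; linarith)
        (by intro e; linarith) (by intro e; linarith) (by intro e; linarith)
      rw [this]; ring
    have T3 : dd3 f x y (z + h) - dd3 f x y z = h * dd4 f (z + h) z x y := by
      rw [dd3_rot f x y (z + h), dd3_rot f x y z]
      have := dd3_replace f (u := z + h) (v := z) (y := x) (z := y)
        (by intro e; linarith) (by intro e; linarith) (by intro e; linarith)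
        (by intro e; linarith) (by intro e; linarith) (by intro e; linarith)
      rw [this]; ring
    have hdd3 : 0 ≤ dd3 (fun t => (f (t + h) - f t) / h) x y z := by
      rw [dd3_Dh]
      have hsum : dd3 f (x + h) (y + h) (z + h) - dd3 f x y z
          = h * (dd4 f (x + h) x (y + h) (z + h) + dd4 f (y + h) y x (z + h)
              + dd4 f (z + h) z x y) := by linarith
      rw [hsum]
      exact div_nonneg (mul_nonneg h0.le (by linarith)) h0.le
    have hsl := slope_sub_dd3 (fun t => (f (t + h) - f t) / h) hxy.ne hyz.ne hxz.ne
    have hmul : 0 ≤ (z - x) * dd3 (fun t => (f (t + h) - f t) / h) x y z :=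
      mul_nonneg (by linarith) hdd3
    linarith
  have t1 : Filter.Tendsto
      (fun h : ℝ => ((f (y + h) - f y) / h - (f (x + h) - f x) / h) / (y - x))
      (𝓝[>] (0:ℝ)) (𝓝 ((deriv f y - deriv f x) / (y - x))) :=
    ((tendstoD y hy).sub (tendstoD x hx)).div_const _
  have t2 : Filter.Tendsto
      (fun h : ℝ => ((f (z + h) - f z) / h - (f (y + h) - f y) / h) / (z - y))
      (𝓝[>] (0:ℝ)) (𝓝 ((deriv f z - deriv f y) / (z - y))) :=
    ((tendstoD z hz).sub (tendstoD y hy)).div_const _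
  exact le_of_tendsto_of_tendsto t1 t2 ev
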